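/- arXiv:0908.2834 — 2 statements merged into one kernel-verified Lean document; each statement's English description precedes it below -/
import Mathlib

section
/- In the reduction from Vertex Cover to Second-Price Matching: for a graph G, the instance f(G) (edge keywords e with bidders {endpoints of e} ∪ {x_e}, and for each vertex v a gadget with keywords h_v, l_v and bidders y_v, z_v, where v and y_v bid for h_v and y_v, z_v bid for l_v; gadget keywords arrive before edge keywords with h_v before l_v) satisfies OPT_{2P}(f(G)) = 2|V(G)| + |E(G)| − OPT_{VC}(G), where OPT_{VC} is the minimum vertex cover size of G and OPT_{2P} the maximum second-price matching value. -/
/-- A second-price matching assignment: each keyword is optionally assigned an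
adjacent bidder, and each bidder is used at most once. -/
def IsPartialMatching {m : ℕ} {V : Type*} (adj : Fin m → V → Prop)
    (g : Fin m → Option V) : Prop :=
  (∀ u v, g u = some v → adj u v) ∧
  (∀ u u' v, g u = some v → g u' = some v → u = u')

/-- Keyword `u` earns profit 1: it is matched to some bidder `v`, and at the moment
of its arrival some other neighbor `v'` of `u` is still unmatched. -/
def Profitable {m : ℕ} {V : Type*} (adj : Fin m → V → Prop)
    (g : Fin m → Option V) (u : Fin m) : Prop :=
  ∃ v v', g u = some v ∧ v' ≠ v ∧ adj u v' ∧ ∀ u' : Fin m, u' ≤ u → g u' ≠ some v'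

-- The value of a second-price matching: the number of keywords matched for profit.
open scoped Classical in
noncomputable def spmValue {m : ℕ} {V : Type*} (adj : Fin m → V → Prop)
    (g : Fin m → Option V) : ℕ :=
  (Finset.univ.filter fun u : Fin m => Profitable adj g u).card

-- The number of keywords matched by an assignment (its size as a plain matching).
open scoped Classical in
noncomputable def matchSize {m : ℕ} {V : Type*} (g : Fin m → Option V) : ℕ :=
  (Finset.univ.filter fun u : Fin m => (g u).isSome).card

/-- The 2PM instance `f(G)` constructed from a graph `G` given by `N` vertices and an
edge list `Eend : Fin M → Fin N × Fin N`. Bidders: vertex bidders `Sum.inl v`, private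
edge bidders `x_e = Sum.inr (Sum.inl e)`, gadget bidders `y_v = Sum.inr (Sum.inr (v,
false))` and `z_v = Sum.inr (Sum.inr (v, true))`. Keywords arrive as: for each vertex
`v`, gadget keyword `h_v` at time `2v` (adjacent to `v` and `y_v`), then `l_v` at time
`2v + 1` (adjacent to `y_v` and `z_v`); afterwards the edge keywords, edge `e` at time
`2N + e`, adjacent to its two endpoints and to `x_e`. -/
def vcAdj (N M : ℕ) (Eend : Fin M → Fin N × Fin N) :
    Fin (2 * N + M) → (Fin N ⊕ (Fin M ⊕ Fin N × Bool)) → Prop := fun t b =>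
  (∃ v : Fin N, (t : ℕ) = 2 * (v : ℕ) ∧
    (b = Sum.inl v ∨ b = Sum.inr (Sum.inr (v, false)))) ∨
  (∃ v : Fin N, (t : ℕ) = 2 * (v : ℕ) + 1 ∧
    (b = Sum.inr (Sum.inr (v, false)) ∨ b = Sum.inr (Sum.inr (v, true)))) ∨
  (∃ e : Fin M, (t : ℕ) = 2 * N + (e : ℕ) ∧
    (b = Sum.inl (Eend e).1 ∨ b = Sum.inl (Eend e).2 ∨ b = Sum.inr (Sum.inl e)))

/-- `S` is a vertex cover of the graph given by the edge list `Eend`. -/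
def IsVC {N M : ℕ} (Eend : Fin M → Fin N × Fin N) (S : Finset (Fin N)) : Prop :=
  ∀ e : Fin M, (Eend e).1 ∈ S ∨ (Eend e).2 ∈ S

-- === auxiliary defs ===

def hIdx (N M : ℕ) (v : Fin N) : Fin (2 * N + M) := ⟨2 * v, by have := v.2; omega⟩
def lIdx (N M : ℕ) (v : Fin N) : Fin (2 * N + M) := ⟨2 * v + 1, by have := v.2; omega⟩
def eIdx (N M : ℕ) (e : Fin M) : Fin (2 * N + M) := ⟨2 * N + e, by have := e.2; omega⟩

lemma adj_hIdx {N M : ℕ} (Eend : Fin M → Fin N × Fin N) (v : Fin N)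
    (b : Fin N ⊕ (Fin M ⊕ Fin N × Bool)) :
    vcAdj N M Eend (hIdx N M v) b ↔
      (b = Sum.inl v ∨ b = Sum.inr (Sum.inr (v, false))) := by
  unfold vcAdj hIdx
  constructor
  · rintro (⟨w, hw, h⟩ | ⟨w, hw, h⟩ | ⟨e, he, h⟩)
    · have hwv : w = v := by apply Fin.ext; simp at hw; omega
      subst hwv; exact h
    · simp at hw; omega
    · have := e.2; have := v.2; simp at he; omega
  · intro h
    exact Or.inl ⟨v, by simp, h⟩

lemma adj_lIdx {N M : ℕ} (Eend : Fin M → Fin N × Fin N) (v : Fin N)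
    (b : Fin N ⊕ (Fin M ⊕ Fin N × Bool)) :
    vcAdj N M Eend (lIdx N M v) b ↔
      (b = Sum.inr (Sum.inr (v, false)) ∨ b = Sum.inr (Sum.inr (v, true))) := by
  unfold vcAdj lIdx
  constructor
  · rintro (⟨w, hw, h⟩ | ⟨w, hw, h⟩ | ⟨e, he, h⟩)
    · simp at hw; omega
    · have hwv : w = v := by apply Fin.ext; simp at hw; omega
      subst hwv; exact h
    · have := e.2; have := v.2; simp at he; omega
  · intro h
    exact Or.inr (Or.inl ⟨v, by simp, h⟩)

lemma adj_eIdx {N M : ℕ} (Eend : Fin M → Fin N × Fin N) (e : Fin M)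
    (b : Fin N ⊕ (Fin M ⊕ Fin N × Bool)) :
    vcAdj N M Eend (eIdx N M e) b ↔
      (b = Sum.inl (Eend e).1 ∨ b = Sum.inl (Eend e).2 ∨ b = Sum.inr (Sum.inl e)) := by
  unfold vcAdj eIdx
  constructor
  · rintro (⟨w, hw, h⟩ | ⟨w, hw, h⟩ | ⟨e', he, h⟩)
    · have := w.2; simp at hw; omega
    · have := w.2; simp at hw; omega
    · have hee : e' = e := by apply Fin.ext; simp at he; omega
      subst hee; exact h
  · intro h
    exact Or.inr (Or.inr ⟨e, by simp, h⟩)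

-- === construction from a vertex cover ===

def gVC {N M : ℕ} (S : Finset (Fin N)) :
    Fin (2 * N + M) → Option (Fin N ⊕ (Fin M ⊕ Fin N × Bool)) := fun t =>
  if h : (t : ℕ) < 2 * N then
    if (t : ℕ) % 2 = 0 then
      (if (⟨(t : ℕ) / 2, by omega⟩ : Fin N) ∈ S then
        some (Sum.inr (Sum.inr (⟨(t : ℕ) / 2, by omega⟩, false)))
      else some (Sum.inl ⟨(t : ℕ) / 2, by omega⟩))
    else
      (if (⟨(t : ℕ) / 2, by omega⟩ : Fin N) ∈ S then
        some (Sum.inr (Sum.inr (⟨(t : ℕ) / 2, by omega⟩, true)))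
      else some (Sum.inr (Sum.inr (⟨(t : ℕ) / 2, by omega⟩, false))))
  else some (Sum.inr (Sum.inl ⟨(t : ℕ) - 2 * N, by have := t.2; omega⟩))

lemma gVC_hIdx {N M : ℕ} (S : Finset (Fin N)) (v : Fin N) :
    gVC (M := M) S (hIdx N M v) =
      (if v ∈ S then some (Sum.inr (Sum.inr (v, false))) else some (Sum.inl v)) := by
  have h2 : ((hIdx N M v : Fin (2*N+M)) : ℕ) = 2 * v := rfl
  have hv := v.2
  unfold gVC
  rw [dif_pos (by omega), if_pos (by omega)]
  have : (⟨((hIdx N M v : Fin (2*N+M)) : ℕ) / 2, by omega⟩ : Fin N) = v := by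
    apply Fin.ext; simp [h2]
  rw [this]

lemma gVC_lIdx {N M : ℕ} (S : Finset (Fin N)) (v : Fin N) :
    gVC (M := M) S (lIdx N M v) =
      (if v ∈ S then some (Sum.inr (Sum.inr (v, true)))
       else some (Sum.inr (Sum.inr (v, false)))) := by
  have h2 : ((lIdx N M v : Fin (2*N+M)) : ℕ) = 2 * v + 1 := rfl
  have hv := v.2
  unfold gVC
  rw [dif_pos (by omega), if_neg (by omega)]
  have : (⟨((lIdx N M v : Fin (2*N+M)) : ℕ) / 2, by omega⟩ : Fin N) = v := by
    apply Fin.ext; simp [h2]; omega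
  rw [this]

lemma gVC_eIdx {N M : ℕ} (S : Finset (Fin N)) (e : Fin M) :
    gVC (N := N) S (eIdx N M e) = some (Sum.inr (Sum.inl e)) := by
  have h2 : ((eIdx N M e : Fin (2*N+M)) : ℕ) = 2 * N + e := rfl
  unfold gVC
  rw [dif_neg (by omega)]
  have : (⟨((eIdx N M e : Fin (2*N+M)) : ℕ) - 2 * N, by have := (eIdx N M e).2; omega⟩ : Fin M) = e := by
    apply Fin.ext; simp [h2]
  rw [this]

lemma gVC_cases {N M : ℕ} (S : Finset (Fin N)) (u : Fin (2 * N + M))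
    (b : Fin N ⊕ (Fin M ⊕ Fin N × Bool)) (h : gVC S u = some b) :
    (∃ v : Fin N, v ∉ S ∧ u = hIdx N M v ∧ b = Sum.inl v) ∨
    (∃ v : Fin N, v ∈ S ∧ u = hIdx N M v ∧ b = Sum.inr (Sum.inr (v, false))) ∨
    (∃ v : Fin N, v ∉ S ∧ u = lIdx N M v ∧ b = Sum.inr (Sum.inr (v, false))) ∨
    (∃ v : Fin N, v ∈ S ∧ u = lIdx N M v ∧ b = Sum.inr (Sum.inr (v, true))) ∨
    (∃ e : Fin M, u = eIdx N M e ∧ b = Sum.inr (Sum.inl e)) := by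
  unfold gVC at h
  by_cases h1 : (u : ℕ) < 2 * N
  · rw [dif_pos h1] at h
    by_cases h2 : (u : ℕ) % 2 = 0
    · rw [if_pos h2] at h
      have hu : u = hIdx N M (⟨(u : ℕ) / 2, by omega⟩ : Fin N) := by
        apply Fin.ext; simp [hIdx]; omega
      by_cases h3 : (⟨(u : ℕ) / 2, by omega⟩ : Fin N) ∈ S
      · rw [if_pos h3] at h
        exact Or.inr (Or.inl ⟨_, h3, hu, (Option.some_injective _ h).symm⟩)
      · rw [if_neg h3] at h
        exact Or.inl ⟨_, h3, hu, (Option.some_injective _ h).symm⟩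
    · rw [if_neg h2] at h
      have hu : u = lIdx N M (⟨(u : ℕ) / 2, by omega⟩ : Fin N) := by
        apply Fin.ext; simp [lIdx]; omega
      by_cases h3 : (⟨(u : ℕ) / 2, by omega⟩ : Fin N) ∈ S
      · rw [if_pos h3] at h
        exact Or.inr (Or.inr (Or.inr (Or.inl ⟨_, h3, hu, (Option.some_injective _ h).symm⟩)))
      · rw [if_neg h3] at h
        exact Or.inr (Or.inr (Or.inl ⟨_, h3, hu, (Option.some_injective _ h).symm⟩))
  · rw [dif_neg h1] at h
    have hu : u = eIdx N M (⟨(u : ℕ) - 2 * N, by have := u.2; omega⟩ : Fin M) := by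
      apply Fin.ext; simp [eIdx]; omega
    exact Or.inr (Or.inr (Or.inr (Or.inr ⟨_, hu, (Option.some_injective _ h).symm⟩)))

lemma gVC_pm {N M : ℕ} (Eend : Fin M → Fin N × Fin N) (S : Finset (Fin N)) :
    IsPartialMatching (vcAdj N M Eend) (gVC S) := by
  constructor
  · intro u b h
    rcases gVC_cases S u b h with ⟨v,_,rfl,rfl⟩|⟨v,_,rfl,rfl⟩|⟨v,_,rfl,rfl⟩|⟨v,_,rfl,rfl⟩|⟨e,rfl,rfl⟩
    · rw [adj_hIdx]; simp
    · rw [adj_hIdx]; simp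
    · rw [adj_lIdx]; simp
    · rw [adj_lIdx]; simp
    · rw [adj_eIdx]; simp
  · intro t t' b h h'
    rcases gVC_cases S t b h with ⟨v,hv,rfl,hb⟩|⟨v,hv,rfl,hb⟩|⟨v,hv,rfl,hb⟩|⟨v,hv,rfl,hb⟩|⟨e,rfl,hb⟩ <;>
      rcases gVC_cases S t' b h' with ⟨w,hw,rfl,hb'⟩|⟨w,hw,rfl,hb'⟩|⟨w,hw,rfl,hb'⟩|⟨w,hw,rfl,hb'⟩|⟨f,rfl,hb'⟩ <;>
      subst hb <;> simp_all

lemma prof_h {N M : ℕ} (Eend : Fin M → Fin N × Fin N) (S : Finset (Fin N)) (v : Fin N) :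
    Profitable (vcAdj N M Eend) (gVC S) (hIdx N M v) := by
  by_cases hv : v ∈ S
  · refine ⟨_, Sum.inl v, by rw [gVC_hIdx, if_pos hv], by simp, by rw [adj_hIdx]; simp, ?_⟩
    intro u' _ hc
    rcases gVC_cases S u' _ hc with ⟨w,hw,hu,hb⟩|⟨w,hw,hu,hb⟩|⟨w,hw,hu,hb⟩|⟨w,hw,hu,hb⟩|⟨f,hu,hb⟩ <;>
      simp_all
  · refine ⟨_, Sum.inr (Sum.inr (v, false)), by rw [gVC_hIdx, if_neg hv], by simp,
      by rw [adj_hIdx]; simp, ?_⟩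
    intro u' hle hc
    rw [Fin.le_def] at hle
    rcases gVC_cases S u' _ hc with ⟨w,hw,hu,hb⟩|⟨w,hw,hu,hb⟩|⟨w,hw,hu,hb⟩|⟨w,hw,hu,hb⟩|⟨f,hu,hb⟩ <;>
      subst hu <;> simp_all [hIdx, lIdx, eIdx] <;> omega

lemma prof_l {N M : ℕ} (Eend : Fin M → Fin N × Fin N) (S : Finset (Fin N)) (v : Fin N)
    (hv : v ∉ S) : Profitable (vcAdj N M Eend) (gVC S) (lIdx N M v) := by
  refine ⟨_, Sum.inr (Sum.inr (v, true)), by rw [gVC_lIdx, if_neg hv], by simp,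
    by rw [adj_lIdx]; simp, ?_⟩
  intro u' _ hc
  rcases gVC_cases S u' _ hc with ⟨w,hw,hu,hb⟩|⟨w,hw,hu,hb⟩|⟨w,hw,hu,hb⟩|⟨w,hw,hu,hb⟩|⟨f,hu,hb⟩ <;>
    simp_all

lemma prof_e {N M : ℕ} (Eend : Fin M → Fin N × Fin N) (S : Finset (Fin N))
    (hS : IsVC Eend S) (e : Fin M) :
    Profitable (vcAdj N M Eend) (gVC S) (eIdx N M e) := by
  have hcov := hS e
  -- pick a covered endpoint
  obtain ⟨w, hwS, hwend⟩ : ∃ w : Fin N, w ∈ S ∧ (w = (Eend e).1 ∨ w = (Eend e).2) := by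
    rcases hcov with h | h
    · exact ⟨_, h, Or.inl rfl⟩
    · exact ⟨_, h, Or.inr rfl⟩
  refine ⟨_, Sum.inl w, gVC_eIdx S e, by simp, by rw [adj_eIdx]; tauto, ?_⟩
  intro u' _ hc
  rcases gVC_cases S u' _ hc with ⟨x,hx,hu,hb⟩|⟨x,hx,hu,hb⟩|⟨x,hx,hu,hb⟩|⟨x,hx,hu,hb⟩|⟨f,hu,hb⟩ <;>
    simp_all

lemma gadget_forced {N M : ℕ} (Eend : Fin M → Fin N × Fin N)
    (g : Fin (2 * N + M) → Option (Fin N ⊕ (Fin M ⊕ Fin N × Bool)))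
    (pm : IsPartialMatching (vcAdj N M Eend) g) (w : Fin N)
    (hh : Profitable (vcAdj N M Eend) g (hIdx N M w))
    (hl : Profitable (vcAdj N M Eend) g (lIdx N M w)) :
    g (hIdx N M w) = some (Sum.inl w) := by
  obtain ⟨v0, v', hgl, hne, hadj', hun⟩ := hl
  obtain ⟨w0, w', hgh, hne2, hadj2, hun2⟩ := hh
  have hw0 : w0 = Sum.inl w ∨ w0 = Sum.inr (Sum.inr (w, false)) :=
    (adj_hIdx Eend w w0).mp (pm.1 _ _ hgh)
  rcases hw0 with rfl | rfl
  · exact hgh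
  · exfalso
    have hv0 : v0 = Sum.inr (Sum.inr (w, false)) ∨ v0 = Sum.inr (Sum.inr (w, true)) :=
      (adj_lIdx Eend w v0).mp (pm.1 _ _ hgl)
    have hv' : v' = Sum.inr (Sum.inr (w, false)) ∨ v' = Sum.inr (Sum.inr (w, true)) :=
      (adj_lIdx Eend w v').mp hadj'
    have hle : hIdx N M w ≤ lIdx N M w := by
      rw [Fin.le_def]; simp [hIdx, lIdx]
    rcases hv0 with rfl | rfl
    · -- g (hIdx w) = g (lIdx w) = y_w, contradiction with injectivity
      have := pm.2 _ _ _ hgh hgl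
      have : (2 : ℕ) * w = 2 * w + 1 := congrArg Fin.val this
      omega
    · -- v' must be y_w, but y_w was matched at hIdx w ≤ lIdx w
      rcases hv' with rfl | rfl
      · exact hun _ hle hgh
      · exact hne rfl

lemma hIdx_inj {N M : ℕ} : Function.Injective (hIdx N M) := by
  intro a b hab
  have : 2 * (a : ℕ) = 2 * (b : ℕ) := congrArg Fin.val hab
  exact Fin.ext (by omega)

lemma lIdx_inj {N M : ℕ} : Function.Injective (lIdx N M) := by
  intro a b hab
  have : 2 * (a : ℕ) + 1 = 2 * (b : ℕ) + 1 := congrArg Fin.val hab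
  exact Fin.ext (by omega)

lemma eIdx_inj {N M : ℕ} : Function.Injective (eIdx N M) := by
  intro a b hab
  have : 2 * N + (a : ℕ) = 2 * N + (b : ℕ) := congrArg Fin.val hab
  exact Fin.ext (by omega)

lemma lower_count {N M : ℕ} (Eend : Fin M → Fin N × Fin N) (S : Finset (Fin N))
    (hS : IsVC Eend S) :
    2 * N + M ≤ spmValue (vcAdj N M Eend) (gVC S) + S.card := by
  classical
  set T1 : Finset (Fin (2 * N + M)) := Finset.univ.image (hIdx N M) with hT1
  set T2 : Finset (Fin (2 * N + M)) := Sᶜ.image (lIdx N M) with hT2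
  set T3 : Finset (Fin (2 * N + M)) := Finset.univ.image (eIdx N M) with hT3
  have d12 : Disjoint T1 T2 := by
    rw [Finset.disjoint_left]
    intro a h1 h2
    simp only [hT1, hT2, Finset.mem_image, Finset.mem_univ, true_and] at h1 h2
    obtain ⟨v, rfl⟩ := h1
    obtain ⟨w, _, hwe⟩ := h2
    have := congrArg Fin.val hwe
    simp [hIdx, lIdx] at this
    omega
  have d3 : Disjoint (T1 ∪ T2) T3 := by
    rw [Finset.disjoint_left]
    intro a h1 h2
    simp only [hT1, hT2, hT3, Finset.mem_union, Finset.mem_image, Finset.mem_univ,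
      true_and] at h1 h2
    obtain ⟨f, rfl⟩ := h2
    rcases h1 with ⟨v, hv⟩ | ⟨v, _, hv⟩ <;>
    · have := congrArg Fin.val hv
      have hv2 := v.2
      simp [hIdx, lIdx, eIdx] at this
      omega
  have hsub : T1 ∪ T2 ∪ T3 ⊆ Finset.univ.filter (fun u => Profitable (vcAdj N M Eend) (gVC S) u) := by
    intro u hu
    simp only [hT1, hT2, hT3, Finset.mem_union, Finset.mem_image, Finset.mem_univ,
      true_and, Finset.mem_compl] at hu
    rw [Finset.mem_filter]
    refine ⟨Finset.mem_univ _, ?_⟩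
    rcases hu with (⟨v, rfl⟩ | ⟨v, hv, rfl⟩) | ⟨e, rfl⟩
    · exact prof_h Eend S v
    · exact prof_l Eend S v hv
    · exact prof_e Eend S hS e
  have hc1 : T1.card = N := by
    rw [hT1, Finset.card_image_of_injective _ hIdx_inj, Finset.card_univ, Fintype.card_fin]
  have hc2 : T2.card = N - S.card := by
    rw [hT2, Finset.card_image_of_injective _ lIdx_inj, Finset.card_compl,
      Fintype.card_fin]
  have hc3 : T3.card = M := by
    rw [hT3, Finset.card_image_of_injective _ eIdx_inj, Finset.card_univ, Fintype.card_fin]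
  have hcard : (T1 ∪ T2 ∪ T3).card = N + (N - S.card) + M := by
    rw [Finset.card_union_of_disjoint d3, Finset.card_union_of_disjoint d12, hc1, hc2, hc3]
  have hle := Finset.card_le_card hsub
  have hSN : S.card ≤ N := by
    have := Finset.card_le_univ S
    simpa using this
  unfold spmValue
  omega

lemma upper_count {N M : ℕ} (Eend : Fin M → Fin N × Fin N)
    (g : Fin (2 * N + M) → Option (Fin N ⊕ (Fin M ⊕ Fin N × Bool)))
    (pm : IsPartialMatching (vcAdj N M Eend) g) :
    ∃ S : Finset (Fin N), IsVC Eend S ∧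
      spmValue (vcAdj N M Eend) g + S.card ≤ 2 * N + M := by
  classical
  set A : Finset (Fin N) := Finset.univ.filter
    (fun v => ¬(Profitable (vcAdj N M Eend) g (hIdx N M v) ∧
       Profitable (vcAdj N M Eend) g (lIdx N M v))) with hA
  set B : Finset (Fin M) := Finset.univ.filter
    (fun e => ¬ Profitable (vcAdj N M Eend) g (eIdx N M e)) with hB
  have key : ∀ w : Fin N, g (hIdx N M w) ≠ some (Sum.inl w) → w ∈ A := by
    intro w hgw
    simp only [hA, Finset.mem_filter, Finset.mem_univ, true_and]
    intro hc
    exact hgw (gadget_forced Eend g pm w hc.1 hc.2)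
  have hle : ∀ w : Fin N, ∀ e : Fin M, hIdx N M w ≤ eIdx N M e := by
    intro w e
    rw [Fin.le_def]
    have := w.2
    simp only [hIdx, eIdx]
    omega
  refine ⟨A ∪ B.image (fun e => (Eend e).1), ?_, ?_⟩
  · -- vertex cover
    intro e
    by_cases hp : Profitable (vcAdj N M Eend) g (eIdx N M e)
    · obtain ⟨b, v', hg, hne, hadj, hun⟩ := hp
      have hb := (adj_eIdx Eend e b).mp (pm.1 _ _ hg)
      rcases hb with hb | hb | hb
      · subst hb
        left
        apply Finset.mem_union_left
        apply key
        intro hc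
        have heq := pm.2 _ _ _ hc hg
        have := congrArg Fin.val heq
        have h2 := ((Eend e).1).2
        simp [hIdx, eIdx] at this
        omega
      · subst hb
        right
        apply Finset.mem_union_left
        apply key
        intro hc
        have heq := pm.2 _ _ _ hc hg
        have := congrArg Fin.val heq
        have h2 := ((Eend e).2).2
        simp [hIdx, eIdx] at this
        omega
      · subst hb
        have hv' := (adj_eIdx Eend e v').mp hadj
        rcases hv' with hv' | hv' | hv'
        · subst hv'
          left
          apply Finset.mem_union_left
          exact key _ (hun _ (hle _ _))
        · subst hv'
          right
          apply Finset.mem_union_left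
          exact key _ (hun _ (hle _ _))
        · exact absurd hv' hne
    · left
      apply Finset.mem_union_right
      simp only [Finset.mem_image]
      exact ⟨e, by simp [hB, hp], rfl⟩
  · -- cardinality
    set f : Fin N → Fin (2 * N + M) := fun v =>
      if Profitable (vcAdj N M Eend) g (hIdx N M v) then lIdx N M v else hIdx N M v
      with hf
    have finj : Function.Injective f := by
      intro a b hab
      simp only [hf] at hab
      split_ifs at hab <;>
      · have := congrArg Fin.val hab
        simp [hIdx, lIdx] at this
        exact Fin.ext (by omega)
    set Q : Finset (Fin (2 * N + M)) := Finset.univ.filter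
      (fun u => ¬ Profitable (vcAdj N M Eend) g u) with hQ
    have hC1 : A.image f ⊆ Q := by
      intro u hu
      simp only [Finset.mem_image] at hu
      obtain ⟨v, hv, rfl⟩ := hu
      simp only [hA, Finset.mem_filter, Finset.mem_univ, true_and] at hv
      simp only [hQ, Finset.mem_filter, Finset.mem_univ, true_and, hf]
      split_ifs with h
      · exact fun hc => hv ⟨h, hc⟩
      · exact h
    have hC2 : B.image (eIdx N M) ⊆ Q := by
      intro u hu
      simp only [Finset.mem_image] at hu
      obtain ⟨e, he, rfl⟩ := hu
      simp only [hB, Finset.mem_filter, Finset.mem_univ, true_and] at he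
      simp only [hQ, Finset.mem_filter, Finset.mem_univ, true_and]
      exact he
    have dC : Disjoint (A.image f) (B.image (eIdx N M)) := by
      rw [Finset.disjoint_left]
      intro a h1 h2
      simp only [Finset.mem_image] at h1 h2
      obtain ⟨v, _, rfl⟩ := h1
      obtain ⟨e, _, he⟩ := h2
      have := congrArg Fin.val he
      have hv2 := v.2
      simp only [hf, eIdx] at this
      split_ifs at this <;> simp [hIdx, lIdx] at this <;> omega
    have hunion : (A.image f ∪ B.image (eIdx N M)).card ≤ Q.card :=
      Finset.card_le_card (Finset.union_subset hC1 hC2)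
    have hcardeq : (A.image f ∪ B.image (eIdx N M)).card = A.card + B.card := by
      rw [Finset.card_union_of_disjoint dC, Finset.card_image_of_injective _ finj,
        Finset.card_image_of_injective _ eIdx_inj]
    have hQcard : spmValue (vcAdj N M Eend) g + Q.card = 2 * N + M := by
      unfold spmValue
      rw [hQ]
      rw [Finset.card_filter_add_card_filter_not]
      rw [Finset.card_univ, Fintype.card_fin]
    have hScard : (A ∪ B.image (fun e => (Eend e).1)).card ≤ A.card + B.card := by
      calc (A ∪ B.image (fun e => (Eend e).1)).card
        ≤ A.card + (B.image (fun e => (Eend e).1)).card := Finset.card_union_le _ _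
        _ ≤ A.card + B.card := by
            have := Finset.card_image_le (s := B) (f := fun e => (Eend e).1)
            omega
    omega

/-- in the reduction from Vertex Cover to Second-Price Matching,
`OPT_2P(f(G)) = 2|V(G)| + |E(G)| − OPT_VC(G)`. -/
theorem vc_reduction_opt (N M : ℕ) (Eend : Fin M → Fin N × Fin N)
    (hsimple : ∀ e, (Eend e).1 ≠ (Eend e).2)
    (opt2p optvc : ℕ)
    (h2p : IsGreatest {s | ∃ g, IsPartialMatching (vcAdj N M Eend) g ∧
        spmValue (vcAdj N M Eend) g = s} opt2p)
    (hvc : IsLeast {s | ∃ S : Finset (Fin N), IsVC Eend S ∧ S.card = s} optvc) :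
    opt2p + optvc = 2 * N + M := by
  obtain ⟨⟨g, pm, hval⟩, hub⟩ := h2p
  obtain ⟨⟨S, hSvc, hScard⟩, hlb⟩ := hvc
  -- lower bound: opt2p + optvc ≥ 2N + M
  have h1 : 2 * N + M ≤ opt2p + optvc := by
    have hmem : spmValue (vcAdj N M Eend) (gVC S) ∈
        {s | ∃ g, IsPartialMatching (vcAdj N M Eend) g ∧ spmValue (vcAdj N M Eend) g = s} :=
      ⟨gVC S, gVC_pm Eend S, rfl⟩
    have h2 := hub hmem
    have h3 := lower_count Eend S hSvc
    omega
  -- upper bound: opt2p + optvc ≤ 2N + M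
  have h2 : opt2p + optvc ≤ 2 * N + M := by
    obtain ⟨S0, hS0vc, hS0⟩ := upper_count Eend g pm
    have h4 : optvc ≤ S0.card := hlb ⟨S0, hS0vc, rfl⟩
    omega
  omega
end

section
/- Let c ≥ 1 be an integer and consider an instance of the Second-Price Ad Auctions problem with m keywords in which every bid b_{u,v} satisfies b_{u,v} ≤ B_v/c. The algorithm that selects the c keywords u with the largest second-highest bids s_u and allocates each of them to its top two bidders achieves profit at least (c/m)·Σ_{u} s_u, and since the optimum is at most Σ_u s_u, this is an (m/c)-approximation. -/
/-- Remaining budgets in the Second-Price Ad Auctions problem after the first `t`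
keywords have been processed: when keyword `t` is allocated to first-price bidder
`v₁` with second-price bidder `v₂`, bidder `v₁` pays `v₂`'s effective bid
`min (b t v₂) (budget of v₂)`. -/
def paaBud {V : Type*} [DecidableEq V] (B : V → ℝ) (b : ℕ → V → ℝ)
    (alloc : ℕ → Option (V × V)) : ℕ → V → ℝ
  | 0 => B
  | t + 1 => fun v =>
    match alloc t with
    | none => paaBud B b alloc t v
    | some (v1, v2) =>
      if v = v1 then paaBud B b alloc t v - min (b t v2) (paaBud B b alloc t v2)
      else paaBud B b alloc t v

/-- The price charged for keyword `t`: the effective bid of its second-price bidder. -/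
def paaPrice {V : Type*} [DecidableEq V] (B : V → ℝ) (b : ℕ → V → ℝ)
    (alloc : ℕ → Option (V × V)) (t : ℕ) : ℝ :=
  match alloc t with
  | none => 0
  | some (_, v2) => min (b t v2) (paaBud B b alloc t v2)

/-- Feasibility of a 2PAA allocation of `m` keywords: only the `m` keywords are
allocated, the two selected bidders are distinct, and the first-price bidder's
effective bid is at least the second-price bidder's effective bid. -/
def paaFeasible {V : Type*} [DecidableEq V] (m : ℕ) (B : V → ℝ) (b : ℕ → V → ℝ)
    (alloc : ℕ → Option (V × V)) : Prop :=
  (∀ t, m ≤ t → alloc t = none) ∧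
  ∀ t < m, ∀ v1 v2, alloc t = some (v1, v2) →
    v1 ≠ v2 ∧
      min (b t v2) (paaBud B b alloc t v2) ≤ min (b t v1) (paaBud B b alloc t v1)

/-- The total profit of a 2PAA allocation. -/
def paaProfit {V : Type*} [DecidableEq V] (m : ℕ) (B : V → ℝ) (b : ℕ → V → ℝ)
    (alloc : ℕ → Option (V × V)) : ℝ :=
  ∑ t ∈ Finset.range m, paaPrice B b alloc t

open Finset in
lemma paa_topc {f : ℕ → ℝ} : ∀ (c : ℕ) (A : Finset ℕ), c ≤ A.card →
    ∃ T ⊆ A, T.card = c ∧ ∀ t ∈ T, ∀ u ∈ A \ T, f u ≤ f t := by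
  intro c
  induction c with
  | zero => intro A _; exact ⟨∅, empty_subset _, card_empty, by simp⟩
  | succ c ih =>
    intro A hA
    have hne : A.Nonempty := card_pos.mp (by omega)
    obtain ⟨a, ha, hmax⟩ := A.exists_max_image f hne
    obtain ⟨T', hT'sub, hT'card, hT'max⟩ := ih (A.erase a)
      (by rw [card_erase_of_mem ha]; omega)
    have haT' : a ∉ T' := fun h => (mem_erase.mp (hT'sub h)).1 rfl
    refine ⟨insert a T', insert_subset ha (hT'sub.trans (erase_subset _ _)),
      by rw [card_insert_of_notMem haT', hT'card], ?_⟩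
    intro t ht u hu
    rcases mem_insert.mp ht with rfl | ht'
    · exact hmax u (mem_sdiff.mp hu).1
    · apply hT'max t ht'
      rw [mem_sdiff] at hu ⊢
      exact ⟨mem_erase.mpr ⟨fun h => hu.2 (h ▸ mem_insert_self a T'), hu.1⟩,
        fun h => hu.2 (mem_insert_of_mem h)⟩


/-- in a 2PAA instance with `m` keywords in which every bid satisfies
`b_{u,v} ≤ B_v / c`, the algorithm allocating each of the `c` keywords with the
largest second-highest bids `s_u` to its top two bidders achieves profit at least
`(c/m) ∑_u s_u`; moreover every feasible solution has profit at most `∑_u s_u`, so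
this is an `m/c`-approximation. (`s t` is the second-highest bid on keyword `t`,
i.e. the largest value of `min (b t v₁) (b t v₂)` over pairs of distinct bidders.) -/
theorem paa_trivial_approx {V : Type*} [Fintype V] [DecidableEq V]
    (m c : ℕ) (hc : 1 ≤ c) (hcm : c ≤ m)
    (B : V → ℝ) (b : ℕ → V → ℝ)
    (hb0 : ∀ t v, 0 ≤ b t v)
    (hbB : ∀ t < m, ∀ v, b t v ≤ B v / c)
    (s : ℕ → ℝ)
    (hs : ∀ t < m, IsGreatest
      {x | ∃ v1 v2 : V, v1 ≠ v2 ∧ x = min (b t v1) (b t v2)} (s t)) :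
    (∃ alloc, paaFeasible m B b alloc ∧
        ((c : ℝ) / m) * ∑ t ∈ Finset.range m, s t ≤ paaProfit m B b alloc) ∧
    (∀ alloc, paaFeasible m B b alloc →
        paaProfit m B b alloc ≤ ∑ t ∈ Finset.range m, s t) := by
  classical
  have hm : 0 < m := lt_of_lt_of_le hc hcm
  have hcR : (0:ℝ) < c := by exact_mod_cast hc
  have hmR : (0:ℝ) < m := by exact_mod_cast hm
  have hB0 : ∀ v, 0 ≤ B v / c := fun v => le_trans (hb0 0 v) (hbB 0 hm v)
  have hs0 : ∀ t < m, 0 ≤ s t := by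
    intro t ht
    obtain ⟨v1, v2, _, heq⟩ := (hs t ht).1
    rw [heq]; exact le_min (hb0 t v1) (hb0 t v2)
  -- upper bound part, proved first
  have upper : ∀ alloc, paaFeasible m B b alloc →
      paaProfit m B b alloc ≤ ∑ t ∈ Finset.range m, s t := by
    intro alloc ⟨hnone, hfeas⟩
    apply Finset.sum_le_sum
    intro t ht
    have htm : t < m := Finset.mem_range.mp ht
    unfold paaPrice
    rcases h : alloc t with _ | ⟨v1, v2⟩
    · exact hs0 t htm
    · obtain ⟨hne, hle⟩ := hfeas t htm v1 v2 h
      have h1 : min (b t v2) (paaBud B b alloc t v2) ≤ min (b t v1) (b t v2) :=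
        le_min (le_trans hle (min_le_left _ _)) (min_le_left _ _)
      exact le_trans h1 ((hs t htm).2 ⟨v1, v2, hne, rfl⟩)
  refine ⟨?_, upper⟩
  -- choose the top-c keywords
  obtain ⟨T, hTsub, hTcard, hTmax⟩ := paa_topc (f := s) c (Finset.range m)
    (by simpa using hcm)
  have hTm : ∀ t ∈ T, t < m := fun t ht => Finset.mem_range.mp (hTsub ht)
  -- choose top two bidders for each keyword in T
  have key : ∀ t ∈ T, ∃ p : V × V, p.1 ≠ p.2 ∧ b t p.2 ≤ b t p.1 ∧ s t = b t p.2 := by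
    intro t ht
    obtain ⟨v1, v2, hne, heq⟩ := (hs t (hTm t ht)).1
    rcases le_total (b t v2) (b t v1) with h | h
    · exact ⟨(v1, v2), hne, h, by rw [heq, min_eq_right h]⟩
    · exact ⟨(v2, v1), hne.symm, h, by rw [heq, min_eq_left h]⟩
  choose p hpne hple hpeq using key
  set alloc : ℕ → Option (V × V) :=
    fun t => if h : t ∈ T then some (p t h) else none with halloc
  have hallocT : ∀ t (h : t ∈ T), alloc t = some (p t h) := fun t h => dif_pos h
  have hallocN : ∀ t, t ∉ T → alloc t = none := fun t h => dif_neg h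
  -- counting function
  set cnt : ℕ → V → ℕ := fun t v =>
    ((T.filter (· < t)).filter (fun u => ∃ q : V × V, alloc u = some q ∧ q.1 = v)).card
    with hcnt
  have cnt_le : ∀ t ∈ T, ∀ v, (cnt t v : ℝ) ≤ (c : ℝ) - 1 := by
    intro t ht v
    have hsub : (T.filter (· < t)).filter
        (fun u => ∃ q : V × V, alloc u = some q ∧ q.1 = v) ⊆ T.erase t := by
      intro u hu
      simp only [Finset.mem_filter] at hu
      exact Finset.mem_erase.mpr ⟨Nat.ne_of_lt hu.1.2, hu.1.1⟩
    have := Finset.card_le_card hsub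
    rw [Finset.card_erase_of_mem ht, hTcard] at this
    have h1 : cnt t v ≤ c - 1 := this
    have : (cnt t v : ℝ) ≤ ((c - 1 : ℕ) : ℝ) := by exact_mod_cast h1
    rwa [Nat.cast_sub hc, Nat.cast_one] at this
  -- budget invariant
  have inv : ∀ t v, B v - (cnt t v : ℝ) * (B v / c) ≤ paaBud B b alloc t v := by
    intro t
    induction t with
    | zero =>
      intro v
      have : cnt 0 v = 0 := by
        simp [hcnt, Finset.filter_eq_empty_iff.mpr]
      rw [this]
      simp [paaBud]
    | succ t ih =>
      intro v
      by_cases ht : t ∈ T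
      · have ha := hallocT t ht
        set v1 := (p t ht).1
        set v2 := (p t ht).2
        have htm := hTm t ht
        have hbud2 : paaBud B b alloc (t+1) v =
            if v = v1 then paaBud B b alloc t v - min (b t v2) (paaBud B b alloc t v2)
            else paaBud B b alloc t v := by
          simp only [paaBud, ha]; rfl
        by_cases hv : v = v1
        ·
          have hcnt1 : cnt t v + 1 ≤ cnt (t+1) v := by
            have hins : insert t ((T.filter (· < t)).filter
                (fun u => ∃ q : V × V, alloc u = some q ∧ q.1 = v)) ⊆
                (T.filter (· < t+1)).filter
                (fun u => ∃ q : V × V, alloc u = some q ∧ q.1 = v) := by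
              intro u hu
              rcases Finset.mem_insert.mp hu with rfl | hu
              · exact Finset.mem_filter.mpr ⟨Finset.mem_filter.mpr ⟨ht, by omega⟩,
                  ⟨p u ht, hallocT u ht, hv.symm⟩⟩
              · simp only [Finset.mem_filter] at hu ⊢
                exact ⟨⟨hu.1.1, by omega⟩, hu.2⟩
            have hnotin : t ∉ (T.filter (· < t)).filter
                (fun u => ∃ q : V × V, alloc u = some q ∧ q.1 = v) := by
              simp only [Finset.mem_filter]
              omega
            have := Finset.card_le_card hins
            rwa [Finset.card_insert_of_notMem hnotin] at this
          have hmin : min (b t v2) (paaBud B b alloc t v2) ≤ B v / c :=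
            le_trans (min_le_left _ _) (le_trans (hple t ht)
              (hv ▸ hbB t htm v1))
          rw [hbud2, if_pos hv]
          have h2 : (cnt t v : ℝ) + 1 ≤ (cnt (t+1) v : ℝ) := by exact_mod_cast hcnt1
          have h3 : B v - (cnt (t+1) v : ℝ) * (B v / c) ≤
              B v - ((cnt t v : ℝ) + 1) * (B v / c) := by
            have := hB0 v
            nlinarith
          nlinarith [ih v]
        · rw [hbud2, if_neg hv]
          have hcnt2 : cnt t v ≤ cnt (t+1) v := by
            apply Finset.card_le_card
            intro u hu
            simp only [Finset.mem_filter] at hu ⊢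
            exact ⟨⟨hu.1.1, by omega⟩, hu.2⟩
          have h2 : (cnt t v : ℝ) ≤ (cnt (t+1) v : ℝ) := by exact_mod_cast hcnt2
          nlinarith [ih v, hB0 v]
      · have ha := hallocN t ht
        have hbud2 : paaBud B b alloc (t+1) v = paaBud B b alloc t v := by
          simp only [paaBud, ha]
        have hcnt2 : cnt t v ≤ cnt (t+1) v := by
          apply Finset.card_le_card
          intro u hu
          simp only [Finset.mem_filter] at hu ⊢
          exact ⟨⟨hu.1.1, by omega⟩, hu.2⟩
        have h2 : (cnt t v : ℝ) ≤ (cnt (t+1) v : ℝ) := by exact_mod_cast hcnt2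
        rw [hbud2]
        nlinarith [ih v, hB0 v]
  -- at every step in T, everyone has at least B v / c budget
  have budT : ∀ t ∈ T, ∀ v, B v / c ≤ paaBud B b alloc t v := by
    intro t ht v
    have h1 := inv t v
    have h2 := cnt_le t ht v
    have h3 : B v / c ≤ B v - (cnt t v : ℝ) * (B v / c) := by
      have hBc : B v = (B v / c) * c := by field_simp
      nlinarith [hB0 v]
    linarith
  -- effective bids at steps in T
  have hmin2 : ∀ t (ht : t ∈ T),
      min (b t (p t ht).2) (paaBud B b alloc t (p t ht).2) = b t (p t ht).2 := by
    intro t ht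
    exact min_eq_left (le_trans (hbB t (hTm t ht) _) (budT t ht _))
  refine ⟨alloc, ⟨?_, ?_⟩, ?_⟩
  · -- none beyond m
    intro t htm
    exact hallocN t (fun h => absurd (hTm t h) (by omega))
  · -- feasibility inequality
    intro t htm v1 v2 ha
    have ht : t ∈ T := by
      by_contra h
      rw [hallocN t h] at ha
      exact Option.some_ne_none _ ha.symm
    rw [hallocT t ht] at ha
    have hp : (v1, v2) = p t ht := by
      exact (Option.some.inj ha).symm
    have h1 : v1 = (p t ht).1 := by rw [← hp]
    have h2 : v2 = (p t ht).2 := by rw [← hp]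
    subst h1; subst h2
    refine ⟨hpne t ht, ?_⟩
    rw [hmin2 t ht]
    exact le_min (hple t ht)
      ((hple t ht).trans ((hbB t (hTm t ht) _).trans (budT t ht _)))
  · -- profit bound
    have hprice : ∀ t ∈ T, paaPrice B b alloc t = s t := by
      intro t ht
      unfold paaPrice
      rw [hallocT t ht]
      simp only
      rw [hmin2 t ht, hpeq t ht]
    have hprice0 : ∀ t ∈ Finset.range m, t ∉ T → paaPrice B b alloc t = 0 := by
      intro t _ ht
      unfold paaPrice
      rw [hallocN t ht]
    have hsum : paaProfit m B b alloc = ∑ t ∈ T, s t := by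
      unfold paaProfit
      rw [← Finset.sum_subset hTsub hprice0]
      exact Finset.sum_congr rfl hprice
    rw [hsum]
    -- (c/m) * Σ_all ≤ Σ_T
    rw [div_mul_eq_mul_div, div_le_iff₀ hmR]
    have hsplit : ∑ t ∈ Finset.range m \ T, s t + ∑ t ∈ T, s t
        = ∑ t ∈ Finset.range m, s t := Finset.sum_sdiff hTsub
    have hR : ∀ u ∈ Finset.range m \ T, (c : ℝ) * s u ≤ ∑ t ∈ T, s t := by
      intro u hu
      calc (c : ℝ) * s u = ∑ _t ∈ T, s u := by
            rw [Finset.sum_const, hTcard]; ring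
        _ ≤ ∑ t ∈ T, s t := Finset.sum_le_sum (fun t ht => hTmax t ht u hu)
    have hRsum : (c : ℝ) * ∑ u ∈ Finset.range m \ T, s u ≤
        ((m - c : ℕ) : ℝ) * ∑ t ∈ T, s t := by
      rw [Finset.mul_sum]
      calc ∑ u ∈ Finset.range m \ T, (c:ℝ) * s u
          ≤ ∑ _u ∈ Finset.range m \ T, ∑ t ∈ T, s t := Finset.sum_le_sum hR
        _ = ((m - c : ℕ) : ℝ) * ∑ t ∈ T, s t := by
            rw [Finset.sum_const, Finset.card_sdiff_of_subset hTsub, Finset.card_range, hTcard]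
            ring
    have hmc : ((m - c : ℕ) : ℝ) = (m : ℝ) - c := by
      rw [Nat.cast_sub hcm]
    rw [hmc] at hRsum
    nlinarith [Finset.sum_le_sum (fun t ht => hs0 t (hTm t ht) : ∀ t ∈ T, 0 ≤ s t)]
end
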